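/- Let (L, ∨, ∧, ') be a dually weakly orthomodular lattice and define x → y := (x ∨ y)' ∨ y. Then → is a D-implication on L, i.e., it satisfies (x ∨ y) → x = y → x, x ∨ y ∨ ((x ∨ z) → y) = z → (x ∨ y), and (x ∨ y) ∧ (x → y) = y. -/
import Mathlib


/-- In a dually weakly orthomodular lattice, x → y := (x ⊔ y)' ⊔ y is a D-implication. -/
theorem stmt_5 {L : Type*} [Lattice L] (f : L → L)
    (dwom : ∀ x y : L, (x ⊔ y) ⊓ (x ⊔ f (x ⊔ y)) = x)
    (impl : L → L → L) (himpl : ∀ x y : L, impl x y = f (x ⊔ y) ⊔ y) :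
    (∀ x y : L, impl (x ⊔ y) x = impl y x) ∧
    (∀ x y z : L, x ⊔ y ⊔ impl (x ⊔ z) y = impl z (x ⊔ y)) ∧
    (∀ x y : L, (x ⊔ y) ⊓ impl x y = y) := by
  refine ⟨fun x y => ?_, fun x y z => ?_, fun x y => ?_⟩
  · rw [himpl, himpl]
    congr 2
    rw [sup_comm x y, sup_assoc, sup_idem]
  · rw [himpl, himpl]
    have h : x ⊔ z ⊔ y = z ⊔ (x ⊔ y) := by
      rw [sup_comm x z, sup_assoc]
    rw [h]
    generalize f (z ⊔ (x ⊔ y)) = a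
    rw [sup_comm a (x ⊔ y), ← sup_assoc, sup_right_comm, sup_assoc x y y, sup_idem]
  · have h := dwom y x
    rw [sup_comm y x, sup_comm y (f (x ⊔ y))] at h
    rw [himpl]
    exact h
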